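/- Let σ: 𝒜* → ℬ* be a non-erasing monoid morphism and X ⊆ 𝒜^ℤ a subshift. If σ is shift-orbit injective in X, then σ is recognizable for aperiodic points in X: whenever x, x' ∈ X and a non-periodic y ∈ ℬ^ℤ satisfy y = T^k(σ^ℤ(x)) and y = T^ℓ(σ^ℤ(x')) with 0 ≤ k ≤ |σ(x_1)|−1 and 0 ≤ ℓ ≤ |σ(x'_1)|−1 (x_1, x'_1 the letters at index 1), then x = x' and k = ℓ. -/

import Mathlib

open MeasureTheory Filter
open scoped ENNReal

namespace SAdicPaper

universe u v

/-- Biinfinite words over the alphabet `A`. -/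
def ZWord (A : Type u) : Type u := ℤ → A

noncomputable instance {A : Type u} : TopologicalSpace (ZWord A) :=
  @Pi.topologicalSpace ℤ (fun _ => A) (fun _ => ⊥)

instance {A : Type u} : MeasurableSpace (ZWord A) :=
  @MeasurableSpace.pi ℤ (fun _ => A) (fun _ => ⊤)

instance finAddTwoNonempty (n : ℕ) : Nonempty (Fin (n + 2)) := ⟨⟨0, by omega⟩⟩

variable {A : Type u} {B : Type v}

/-- The shift map `T`. -/
def shift (x : ZWord A) : ZWord A := fun i => x (i + 1)

/-- Shift by an arbitrary integer amount. -/
def shiftBy (m : ℤ) (x : ZWord A) : ZWord A := fun i => x (i + m)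

/-- A subshift: a non-empty, closed, shift-invariant set of biinfinite words. -/
def IsSubshift (X : Set (ZWord A)) : Prop :=
  X.Nonempty ∧ IsClosed X ∧ shift '' X = X

/-- The finite subword of `x` of length `n` starting at position `k`. -/
def subword (x : ZWord A) (k : ℤ) (n : ℕ) : List A :=
  (List.range n).map fun i => x (k + i)

/-- The language of finite factors of elements of `X`. -/
def lang (X : Set (ZWord A)) : Set (List A) :=
  { w | ∃ x ∈ X, ∃ k : ℤ, w = subword x k w.length }

/-- The subshift generated by a language. -/
def subshiftGen (L : Set (List A)) : Set (ZWord A) :=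
  { x | ∀ (k : ℤ) (n : ℕ), ∃ u ∈ L, subword x k n <:+: u }

/-- Extension of a letter map `σ : A → List B` to words: the free monoid morphism. -/
def wordMap (σ : A → List B) (w : List A) : List B := (w.map σ).flatten

/-- A morphism is non-erasing if no letter is mapped to the empty word. -/
def NonErasing (σ : A → List B) : Prop := ∀ a, σ a ≠ []

/-- The image subshift `σ(X)`. -/
def imageSubshift (σ : A → List B) (X : Set (ZWord A)) : Set (ZWord B) :=
  subshiftGen (wordMap σ '' lang X)

/-- The position at which the `σ`-image of the letter of `x` at index `n` starts
(the image of the letter at index 1 starts at index 1). -/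
noncomputable def offset (σ : A → List B) (x : ZWord A) (n : ℤ) : ℤ :=
  if 1 ≤ n then 1 + ∑ i ∈ Finset.Ico (1 : ℤ) n, ((σ (x i)).length : ℤ)
  else 1 - ∑ i ∈ Finset.Ico n (1 : ℤ), ((σ (x i)).length : ℤ)

/-- The induced map `σ^ℤ` on biinfinite words. -/
noncomputable def sigmaZ [Nonempty B] (σ : A → List B) (x : ZWord A) : ZWord B := fun j =>
  let n := Classical.epsilon fun n : ℤ => offset σ x n ≤ j ∧ j < offset σ x (n + 1)
  (σ (x n)).getD (j - offset σ x n).toNat (Classical.arbitrary B)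

/-- The cylinder `[w]`: biinfinite words `x` with `x₁ ⋯ x_{|w|} = w`. -/
def cylinder (w : List A) : Set (ZWord A) :=
  { x | ∀ i : Fin w.length, x (((i : ℕ) : ℤ) + 1) = w.get i }

/-- Shift-invariance of a measure. -/
def ShiftInvariantM (μ : Measure (ZWord A)) : Prop :=
  ∀ S : Set (ZWord A), MeasurableSet S → μ (shift ⁻¹' S) = μ S

/-- The cone `ℳ(X)` of shift-invariant finite Borel measures supported in `X`. -/
def measureCone (X : Set (ZWord A)) : Set (Measure (ZWord A)) :=
  { μ | μ Set.univ ≠ ⊤ ∧ ShiftInvariantM μ ∧ μ Xᶜ = 0 }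

/-- The subdivision alphabet `𝒜_σ`. -/
def SubAlph (σ : A → List B) : Type u := Σ a : A, Fin (σ a).length

/-- The subdivision morphism `π_σ`. -/
def subdivMap (σ : A → List B) : A → List (SubAlph σ) :=
  fun a => (List.finRange (σ a).length).map fun k => ⟨a, k⟩

/-- The letter-to-letter map `α_σ` on letters. -/
def letterMap (σ : A → List B) : SubAlph σ → B := fun p => (σ p.1).get p.2

/-- The letter-to-letter morphism `α_σ`. -/
def alphaMap (σ : A → List B) : SubAlph σ → List B := fun p => [letterMap σ p]

/-- The map `α_σ^ℤ` on biinfinite words. -/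
def alphaZ (σ : A → List B) : ZWord (SubAlph σ) → ZWord B := fun y i => letterMap σ (y i)

/-- The measure transfer map `σ^ℳ`: the push-forward under `α_σ` of the
subdivision measure `μ^{π_σ}` (realized concretely on the subdivision full shift). -/
noncomputable def transfer (σ : A → List B) (μ : Measure (ZWord A)) : Measure (ZWord B) :=
  letI := Classical.propDecidable (Nonempty (SubAlph σ))
  if h : Nonempty (SubAlph σ) then
    haveI := h
    Measure.map (alphaZ σ)
      (Measure.sum fun k : ℕ =>
        Measure.map (fun x => shift^[k] (sigmaZ (subdivMap σ) x))
          (μ.restrict { x | k < (σ (x 1)).length }))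
  else 0

/-- Recognizability of `σ` in a subshift `X`. -/
def Recognizable [Nonempty B] (σ : A → List B) (X : Set (ZWord A)) : Prop :=
  ∀ x ∈ X, ∀ x' ∈ X, ∀ k l : ℕ,
    k < (σ (x 1)).length → l < (σ (x' 1)).length →
    shift^[k] (sigmaZ σ x) = shift^[l] (sigmaZ σ x') → x = x' ∧ k = l

/-- `x` and `y` lie in the same shift-orbit. -/
def sameOrbit (x y : ZWord A) : Prop := ∃ m : ℤ, y = shiftBy m x

/-- `σ` is shift-orbit injective in `X`. -/
def ShiftOrbitInjective [Nonempty B] (σ : A → List B) (X : Set (ZWord A)) : Prop :=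
  ∀ x ∈ X, ∀ y ∈ X, (sameOrbit (sigmaZ σ x) (sigmaZ σ y) ↔ sameOrbit x y)

/-- The periodic biinfinite word `w^{±∞}`. -/
def periodicWord (w : List A) (h : w ≠ []) : ZWord A := fun i =>
  w.get ⟨(i % (w.length : ℤ)).toNat, by
    have hl : 0 < w.length := by
      rcases w with _ | ⟨a, t⟩
      · exact absurd rfl h
      · simp
    have h1 : 0 ≤ i % (w.length : ℤ) := Int.emod_nonneg i (by exact_mod_cast hl.ne')
    have h2 : i % (w.length : ℤ) < (w.length : ℤ) := Int.emod_lt_of_pos i (by exact_mod_cast hl)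
    omega⟩

/-- A word is a proper power if `w = u^m` for some `m ≥ 2`. -/
def IsProperPower (w : List A) : Prop :=
  ∃ (u : List A) (m : ℕ), 2 ≤ m ∧ w = (List.replicate m u).flatten

/-- `σ` is shift-period preserving in `X`. -/
def ShiftPeriodPreserving (σ : A → List B) (X : Set (ZWord A)) : Prop :=
  ∀ (w : List A) (h : w ≠ []), periodicWord w h ∈ X →
    (IsProperPower w ↔ IsProperPower (wordMap σ w))

/-- The incidence matrix `M(σ)` of a morphism. -/
noncomputable def incidence (σ : A → List B) : Matrix B A ℝ :=
  letI := Classical.decEq B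
  Matrix.of fun b a => ((σ a).count b : ℝ)

/-- The number `|u|_w` of occurrences of `w` as a factor of `u`. -/
noncomputable def occ (w u : List A) : ℕ :=
  letI := Classical.decEq A
  ((List.range (u.length + 1)).filter fun i => decide ((u.drop i).take w.length = w)).length

/-- A minimal subshift. -/
def IsMinimalSubshift (X : Set (ZWord A)) : Prop :=
  IsSubshift X ∧ ∀ Y, Y ⊆ X → IsSubshift Y → Y = X

/-- A shift-invariant probability measure. -/
def IsProbInvariant (μ : Measure (ZWord A)) : Prop :=
  ShiftInvariantM μ ∧ μ Set.univ = 1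

/-- An ergodic shift-invariant probability measure: not a positive linear combination
of two distinct shift-invariant probability measures. -/
def IsErgodicMeasure (μ : Measure (ZWord A)) : Prop :=
  IsProbInvariant μ ∧
    ∀ ν₁ ν₂ : Measure (ZWord A), IsProbInvariant ν₁ → IsProbInvariant ν₂ →
      ∀ c₁ c₂ : ℝ≥0∞, 0 < c₁ → 0 < c₂ → μ = c₁ • ν₁ + c₂ • ν₂ → ν₁ = ν₂

/-- Aperiodicity: no shift-periodic word in `X`. -/
def Aperiodic (X : Set (ZWord A)) : Prop :=
  ∀ x ∈ X, ∀ p : ℕ, 0 < p → shift^[p] x ≠ x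

/-- Unique ergodicity of a subshift `X`. -/
def UniquelyErgodic (X : Set (ZWord A)) : Prop :=
  ∃! μ : Measure (ZWord A), IsErgodicMeasure μ ∧ μ ∈ measureCone X

/-- The complexity function `p_X(n)`. -/
noncomputable def complexity (X : Set (ZWord A)) (n : ℕ) : ℕ :=
  Set.ncard { w : List A | w ∈ lang X ∧ w.length = n }

/-- The letter frequency vector of a measure. -/
noncomputable def freqMap (μ : Measure (ZWord A)) : A → ℝ := fun a => (μ (cylinder [a])).toReal

/-- The letter frequency cone `𝒞(X)`. -/
def letterFreqCone (X : Set (ZWord A)) : Set (A → ℝ) := freqMap '' measureCone X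

/-- A primitive substitution: some power of the incidence matrix is positive. -/
def Primitive (τ : A → List A) : Prop :=
  ∃ p : ℕ, 0 < p ∧ ∀ a b : A, b ∈ (wordMap τ)^[p] [a]

/-- The substitutive subshift of a substitution. -/
def substitutiveSubshift (τ : A → List A) : Set (ZWord A) :=
  { x | ∀ (k : ℤ) (m : ℕ), ∃ (p : ℕ) (a : A), 1 ≤ p ∧ subword x k m <:+: (wordMap τ)^[p] [a] }

section Directive

variable {𝒜 : ℕ → Type u}

/-- The telescoped morphism `σ_{[0,n)}`, on letters. -/
def teleW (σ : ∀ n, 𝒜 (n+1) → List (𝒜 n)) : (n : ℕ) → 𝒜 n → List (𝒜 0)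
  | 0, a => [a]
  | n+1, a => wordMap (teleW σ n) (σ n a)

/-- The telescoped morphism `σ_{[k,k+m)}`, on letters. -/
def teleWFrom (σ : ∀ n, 𝒜 (n+1) → List (𝒜 n)) (k : ℕ) : (m : ℕ) → 𝒜 (k + m) → List (𝒜 k)
  | 0, a => [a]
  | m+1, a => wordMap (teleWFrom σ k m) (σ (k + m) a)

/-- An everywhere growing directive sequence. -/
def EverywhereGrowing (σ : ∀ n, 𝒜 (n+1) → List (𝒜 n)) : Prop :=
  ∀ N : ℕ, ∃ n₀ : ℕ, ∀ n, n₀ ≤ n → ∀ a : 𝒜 n, N ≤ (teleW σ n a).length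

/-- The subshift generated by a directive sequence. -/
def genSubshift (σ : ∀ n, 𝒜 (n+1) → List (𝒜 n)) : Set (ZWord (𝒜 0)) :=
  { x | ∀ (k : ℤ) (m : ℕ), ∃ n : ℕ, 1 ≤ n ∧ ∃ a : 𝒜 n, subword x k m <:+: teleW σ n a }

/-- The level-`k` subshift of a directive sequence. -/
def levelSubshift (σ : ∀ n, 𝒜 (n+1) → List (𝒜 n)) (k : ℕ) : Set (ZWord (𝒜 k)) :=
  genSubshift (𝒜 := fun n => 𝒜 (k + n)) (fun n => σ (k + n))

/-- A vector tower on a directive sequence. -/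
def IsVectorTower [∀ n, Fintype (𝒜 n)] (σ : ∀ n, 𝒜 (n+1) → List (𝒜 n))
    (v : ∀ n, 𝒜 n → ℝ) : Prop :=
  (∀ n a, 0 ≤ v n a) ∧ ∀ n, v n = (incidence (σ n)).mulVec (v (n+1))

/-- `μ = 𝔪(v)` is the invariant measure on the generated subshift obtained by
evaluating the vector tower `v`. -/
def IsTowerMeasure [∀ n, Fintype (𝒜 n)] (σ : ∀ n, 𝒜 (n+1) → List (𝒜 n))
    (v : ∀ n, 𝒜 n → ℝ) (μ : Measure (ZWord (𝒜 0))) : Prop :=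
  μ ∈ measureCone (genSubshift σ) ∧
    ∀ w : List (𝒜 0),
      Tendsto (fun n => ∑ a : 𝒜 n, v n a * (occ w (teleW σ n a) : ℝ)) atTop
        (nhds ((μ (cylinder w)).toReal))

/-- A measure tower on a directive sequence. -/
def IsMeasureTower (σ : ∀ n, 𝒜 (n+1) → List (𝒜 n))
    (μs : ∀ n, Measure (ZWord (𝒜 n))) : Prop :=
  (∀ n, μs n ∈ measureCone (Set.univ : Set (ZWord (𝒜 n)))) ∧
    ∀ n, μs n = transfer (σ n) (μs (n+1))

/-- The intermediate letter frequency cone `𝒞_n`. -/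
def freqConeAt [∀ n, Fintype (𝒜 n)] (σ : ∀ n, 𝒜 (n+1) → List (𝒜 n)) (n : ℕ) :
    Set (𝒜 n → ℝ) :=
  ⋂ m : ℕ, (incidence (teleWFrom σ n (m+1))).mulVec '' { v | ∀ a, 0 ≤ v a }

/-- The dimension `c_n` of the intermediate letter frequency cone. -/
noncomputable def dimC [∀ n, Fintype (𝒜 n)] (σ : ∀ n, 𝒜 (n+1) → List (𝒜 n)) (n : ℕ) : ℕ :=
  Module.finrank ℝ (Submodule.span ℝ (freqConeAt σ n))

end Directive

section Prolong

variable {B : Type u} {𝒜 : ℕ → Type u}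

/-- Alphabets of the prolonged directive sequence `⃖σ^τ`. -/
def prolongA (B : Type u) (𝒜 : ℕ → Type u) : ℕ → Type u
  | 0 => B
  | n+1 => 𝒜 n

instance prolongAFintype [Fintype B] [∀ n, Fintype (𝒜 n)] :
    ∀ n, Fintype (prolongA B 𝒜 n)
  | 0 => inferInstanceAs (Fintype B)
  | n+1 => inferInstanceAs (Fintype (𝒜 n))

/-- The prolonged directive sequence `⃖σ^τ`. -/
def prolongSeq (τ : 𝒜 0 → List B) (σ : ∀ n, 𝒜 (n+1) → List (𝒜 n)) :
    ∀ n, prolongA B 𝒜 (n+1) → List (prolongA B 𝒜 n)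
  | 0 => τ
  | n+1 => σ n

/-- The prolonged vector tower `⃖v^τ`. -/
noncomputable def prolongTower [Fintype (𝒜 0)] (τ : 𝒜 0 → List B) (v : ∀ n, 𝒜 n → ℝ) :
    ∀ n, prolongA B 𝒜 n → ℝ
  | 0 => (incidence τ).mulVec (v 0)
  | n+1 => v n

end Prolong

/-- The morphism `τ_d : 𝒜_{d+1}* → 𝒜_d*`, `a_i ↦ a_i a_i` (i ≤ d), `a_{d+1} ↦ a_1 ⋯ a_d`. -/
def tauMap (d : ℕ) : Fin (d+1) → List (Fin d) := fun i =>
  if h : (i : ℕ) < d then [⟨i, h⟩, ⟨i, h⟩] else List.ofFn (fun j : Fin d => j)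

/-- Sizes of the alphabets of the alternating sequence `σ₂ ∘ τ₂ ∘ σ₃ ∘ τ₃ ∘ ⋯`. -/
def sz (n : ℕ) : ℕ := n / 2 + 2

/-- The alternating directive sequence `σ₂ ∘ τ₂ ∘ σ₃ ∘ τ₃ ∘ ⋯`. -/
def altSeq (σfam : ∀ d, Fin d → List (Fin d)) (n : ℕ) : Fin (sz (n+1)) → List (Fin (sz n)) :=
  fun a =>
    if h : n % 2 = 0 then
      σfam (sz n) (Fin.cast (by simp only [sz]; omega) a)
    else
      tauMap (sz n) (Fin.cast (by simp only [sz]; omega) a)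

section AuxRecog

variable {A : Type u} {B : Type v}

lemma shiftBy_shiftBy (a b : ℤ) (x : ZWord A) :
    shiftBy a (shiftBy b x) = shiftBy (a + b) x := by
  funext i
  show x (i + a + b) = x (i + (a + b))
  congr 1; ring

lemma shiftBy_zero (x : ZWord A) : shiftBy 0 x = x := by
  funext i; show x (i + 0) = x i; congr 1; ring

lemma shift_iter_eq (k : ℕ) (x : ZWord A) : shift^[k] x = shiftBy (k : ℤ) x := by
  induction k with
  | zero => simpa using (shiftBy_zero x).symm
  | succ n ih =>
    rw [Function.iterate_succ_apply', ih]
    funext i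
    show shiftBy (n : ℤ) x (i + 1) = x (i + ((n : ℤ) + 1))
    show x (i + 1 + (n : ℤ)) = x (i + ((n : ℤ) + 1))
    congr 1; ring

lemma zsum_Ico_singleton (f : ℤ → ℤ) (b : ℤ) :
    ∑ i ∈ Finset.Ico b (b + 1), f i = f b := by
  have hs : Finset.Ico b (b + 1) = {b} := by
    ext i
    simp only [Finset.mem_Ico, Finset.mem_singleton]
    omega
  rw [hs, Finset.sum_singleton]

lemma zsum_Ico_succ_top (f : ℤ → ℤ) {a b : ℤ} (h : a ≤ b) :
    ∑ i ∈ Finset.Ico a (b + 1), f i = (∑ i ∈ Finset.Ico a b, f i) + f b := by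
  have hu : Finset.Ico a b ∪ Finset.Ico b (b + 1) = Finset.Ico a (b + 1) :=
    Finset.Ico_union_Ico_eq_Ico h (by omega)
  have hd : Disjoint (Finset.Ico a b) (Finset.Ico b (b + 1)) :=
    Finset.Ico_disjoint_Ico_consecutive a b (b + 1)
  rw [← hu, Finset.sum_union hd, zsum_Ico_singleton]

lemma zsum_Ico_succ_bot (f : ℤ → ℤ) {a b : ℤ} (h : a < b) :
    ∑ i ∈ Finset.Ico a b, f i = f a + ∑ i ∈ Finset.Ico (a + 1) b, f i := by
  have hu : Finset.Ico a (a + 1) ∪ Finset.Ico (a + 1) b = Finset.Ico a b :=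
    Finset.Ico_union_Ico_eq_Ico (by omega) (by omega)
  have hd : Disjoint (Finset.Ico a (a + 1)) (Finset.Ico (a + 1) b) :=
    Finset.Ico_disjoint_Ico_consecutive a (a + 1) b
  rw [← hu, Finset.sum_union hd, zsum_Ico_singleton]

lemma offset_succ (σ : A → List B) (x : ZWord A) (n : ℤ) :
    offset σ x (n + 1) = offset σ x n + ((σ (x n)).length : ℤ) := by
  rcases lt_trichotomy n 0 with h | h | h
  · have h1 : offset σ x (n + 1) = 1 - ∑ i ∈ Finset.Ico (n + 1) (1 : ℤ),
        ((σ (x i)).length : ℤ) := by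
      unfold offset; rw [if_neg (by omega)]
    have h2 : offset σ x n = 1 - ∑ i ∈ Finset.Ico n (1 : ℤ),
        ((σ (x i)).length : ℤ) := by
      unfold offset; rw [if_neg (by omega)]
    have h3 := zsum_Ico_succ_bot (fun i => ((σ (x i)).length : ℤ)) (show n < 1 by omega)
    rw [h1, h2, h3]
    ring
  · subst h
    have h1 : offset σ x ((0 : ℤ) + 1) = 1 := by
      norm_num
      simp [offset]
    have h2 : offset σ x 0 = 1 - ∑ i ∈ Finset.Ico (0 : ℤ) (1 : ℤ),
        ((σ (x i)).length : ℤ) := by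
      unfold offset; rw [if_neg (by omega)]
    have h3 := zsum_Ico_singleton (fun i => ((σ (x i)).length : ℤ)) 0
    norm_num at h3
    rw [h1, h2, h3]
    ring
  · have h1 : offset σ x (n + 1) = 1 + ∑ i ∈ Finset.Ico (1 : ℤ) (n + 1),
        ((σ (x i)).length : ℤ) := by
      unfold offset; rw [if_pos (by omega)]
    have h2 : offset σ x n = 1 + ∑ i ∈ Finset.Ico (1 : ℤ) n,
        ((σ (x i)).length : ℤ) := by
      unfold offset; rw [if_pos (by omega)]
    have h3 := zsum_Ico_succ_top (fun i => ((σ (x i)).length : ℤ)) (show (1 : ℤ) ≤ n by omega)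
    rw [h1, h2, h3]
    ring

lemma offset_one (σ : A → List B) (x : ZWord A) : offset σ x 1 = 1 := by
  simp [offset]

lemma length_pos (hσ : NonErasing σ) (a : A) : (1 : ℤ) ≤ ((σ a).length : ℤ) := by
  have := List.length_pos_iff.mpr (hσ a)
  exact_mod_cast this

lemma offset_add_nat {σ : A → List B} (hσ : NonErasing σ) (x : ZWord A) (n : ℤ) :
    ∀ d : ℕ, offset σ x n + d ≤ offset σ x (n + d) := by
  intro d
  induction d with
  | zero => simp
  | succ d ih =>
    have h1 := offset_succ σ x (n + (d : ℤ))
    have h2 := length_pos hσ (x (n + (d : ℤ)))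
    have h3 : n + ((d + 1 : ℕ) : ℤ) = (n + (d : ℤ)) + 1 := by push_cast; ring
    rw [h3]
    omega

lemma offset_mono {σ : A → List B} (hσ : NonErasing σ) (x : ZWord A) :
    ∀ n m : ℤ, n ≤ m → offset σ x n + (m - n) ≤ offset σ x m := by
  intro n m hnm
  have h1 := offset_add_nat hσ x n (m - n).toNat
  have h3 : n + (((m - n).toNat : ℕ) : ℤ) = m := by omega
  rw [h3] at h1
  omega


lemma locate_unique {σ : A → List B} (hσ : NonErasing σ) (x : ZWord A) {j n m : ℤ}
    (h1 : offset σ x n ≤ j) (h2 : j < offset σ x (n + 1))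
    (h3 : offset σ x m ≤ j) (h4 : j < offset σ x (m + 1)) : n = m := by
  rcases lt_trichotomy n m with h | h | h
  · have := offset_mono hσ x (n + 1) m (by omega); omega
  · exact h
  · have := offset_mono hσ x (m + 1) n (by omega); omega

lemma exists_locate {σ : A → List B} (hσ : NonErasing σ) (x : ZWord A) (j : ℤ) :
    ∃ n : ℤ, offset σ x n ≤ j ∧ j < offset σ x (n + 1) := by
  set n₀ : ℤ := min j 1 with hn₀
  have hle1 : n₀ ≤ 1 := min_le_right _ _
  have hlej : n₀ ≤ j := min_le_left _ _
  have h0 : offset σ x n₀ ≤ j := by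
    have := offset_mono hσ x n₀ 1 hle1
    rw [offset_one] at this
    omega
  have hex : ∃ k : ℕ, ¬ offset σ x (n₀ + k) ≤ j := by
    refine ⟨(max (j + 1) 1 - n₀).toNat, ?_⟩
    have h1 : n₀ + ((max (j + 1) 1 - n₀).toNat : ℤ) = max (j + 1) 1 := by
      have : n₀ ≤ max (j + 1) 1 := le_trans hle1 (le_max_right _ _)
      omega
    rw [h1]
    have := offset_mono hσ x 1 (max (j + 1) 1) (le_max_right _ _)
    rw [offset_one] at this
    omega
  classical
  have hKspec := Nat.find_spec hex
  have hKpos : Nat.find hex ≠ 0 := by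
    intro h
    apply Nat.find_spec hex
    rw [h]
    simpa using h0
  refine ⟨n₀ + ((Nat.find hex - 1 : ℕ) : ℤ), ?_, ?_⟩
  · have hmin := Nat.find_min hex (m := Nat.find hex - 1) (by omega)
    exact not_not.mp hmin
  · have harg : n₀ + ((Nat.find hex - 1 : ℕ) : ℤ) + 1 = n₀ + ((Nat.find hex : ℕ) : ℤ) := by
      omega
    rw [harg]
    omega

lemma sigmaZ_eq [Nonempty B] {σ : A → List B} (hσ : NonErasing σ) (x : ZWord A) {j n : ℤ}
    (h1 : offset σ x n ≤ j) (h2 : j < offset σ x (n + 1)) :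
    sigmaZ σ x j = (σ (x n)).getD (j - offset σ x n).toNat (Classical.arbitrary B) := by
  have hex : ∃ m : ℤ, offset σ x m ≤ j ∧ j < offset σ x (m + 1) := ⟨n, h1, h2⟩
  have hspec := Classical.epsilon_spec hex
  have heq : (Classical.epsilon fun m : ℤ => offset σ x m ≤ j ∧ j < offset σ x (m + 1)) = n :=
    locate_unique hσ x hspec.1 hspec.2 h1 h2
  show (σ (x _)).getD _ _ = _
  rw [heq]

lemma offset_shiftBy {σ : A → List B} (x : ZWord A) (m : ℤ) :
    ∀ n : ℤ, offset σ (shiftBy m x) n = offset σ x (n + m) - offset σ x (1 + m) + 1 := by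
  have step : ∀ n : ℤ, offset σ (shiftBy m x) (n + 1)
      = offset σ (shiftBy m x) n + ((σ (x (n + m))).length : ℤ) := by
    intro n
    have := offset_succ σ (shiftBy m x) n
    exact this
  intro n
  induction n using Int.induction_on with
  | zero =>
    have h1 := step 0
    have h2 := offset_succ σ x m
    have h3 : offset σ x (1 + m) = offset σ x (m + 1) := by rw [add_comm]
    have h4 := offset_one σ (shiftBy m x)
    norm_num at h1 ⊢
    rw [h4] at h1
    omega
  | succ n ih =>
    have h1 := step n
    have h2 := offset_succ σ x (n + m)
    have h3 : ((n : ℤ) + 1) + m = (n + m) + 1 := by ring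
    rw [h3, h2, h1, ih]
    ring
  | pred n ih =>
    have h1 := step (-(n : ℤ) - 1)
    have h2 := offset_succ σ x (-(n : ℤ) - 1 + m)
    have h3 : (-(n : ℤ) - 1) + 1 = -(n : ℤ) := by ring
    have h4 : (-(n : ℤ) - 1 + m) + 1 = -(n : ℤ) + m := by ring
    rw [h3] at h1
    rw [h4] at h2
    rw [ih] at h1
    omega

lemma sigmaZ_shiftBy [Nonempty B] {σ : A → List B} (hσ : NonErasing σ) (x : ZWord A) (m : ℤ) :
    sigmaZ σ (shiftBy m x) = shiftBy (offset σ x (m + 1) - 1) (sigmaZ σ x) := by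
  funext j
  set c : ℤ := offset σ x (m + 1) - 1 with hc
  obtain ⟨n, h1, h2⟩ := exists_locate hσ (shiftBy m x) j
  have hF : offset σ (shiftBy m x) n = offset σ x (n + m) - offset σ x (1 + m) + 1 :=
    offset_shiftBy x m n
  have hF1 : offset σ (shiftBy m x) (n + 1) = offset σ x (n + 1 + m) - offset σ x (1 + m) + 1 :=
    offset_shiftBy x m (n + 1)
  have hcc : offset σ x (1 + m) = c + 1 := by rw [hc, add_comm 1 m]; ring
  have hg1 : offset σ x (n + m) ≤ j + c := by omega
  have hg2 : j + c < offset σ x ((n + m) + 1) := by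
    have : n + 1 + m = (n + m) + 1 := by ring
    rw [this] at hF1; omega
  have lhs := sigmaZ_eq hσ (shiftBy m x) h1 h2
  have rhs := sigmaZ_eq hσ x hg1 hg2
  show sigmaZ σ (shiftBy m x) j = sigmaZ σ x (j + c)
  rw [lhs, rhs]
  have hlet : (shiftBy m x) n = x (n + m) := rfl
  rw [hlet]
  congr 1
  omega

lemma aperiodic_int {y : ZWord B} (hap : ∀ p : ℕ, 0 < p → shift^[p] y ≠ y) :
    ∀ d : ℤ, shiftBy d y = y → d = 0 := by
  have key : ∀ d : ℤ, 0 < d → shiftBy d y ≠ y := by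
    intro d hd h
    refine hap d.toNat (by omega) ?_
    rw [shift_iter_eq]
    have : ((d.toNat : ℤ)) = d := by omega
    rw [this, h]
  intro d hd
  by_contra h
  rcases lt_trichotomy d 0 with h1 | h1 | h1
  · have : shiftBy (-d) y = y := by
      conv_lhs => rw [← hd]
      rw [shiftBy_shiftBy]
      simpa using shiftBy_zero y
    exact key (-d) (by omega) this
  · exact h h1
  · exact key d h1 hd

end AuxRecog

/-- If a non-erasing morphism `σ : 𝒜* → ℬ*` is shift-orbit injective in a
subshift `X ⊆ 𝒜^ℤ`, then `σ` is recognizable for aperiodic points in `X`. -/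
theorem recognizable_for_aperiodic_points_of_shiftOrbitInjective {A : Type u} {B : Type v}
    [Nonempty B]
    (σ : A → List B) (hσ : NonErasing σ)
    (X : Set (ZWord A)) (hX : IsSubshift X)
    (hinj : ShiftOrbitInjective σ X) :
    ∀ x ∈ X, ∀ x' ∈ X, ∀ k l : ℕ,
      k < (σ (x 1)).length → l < (σ (x' 1)).length →
      (∀ p : ℕ, 0 < p → shift^[p] (shift^[k] (sigmaZ σ x)) ≠ shift^[k] (sigmaZ σ x)) →
      shift^[k] (sigmaZ σ x) = shift^[l] (sigmaZ σ x') → x = x' ∧ k = l := by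
  intro x hx x' hx' k l hk hl hap heq
  rw [shift_iter_eq, shift_iter_eq] at heq
  -- sigmaZ σ x' = shiftBy (k - l) (sigmaZ σ x)
  have horb : sigmaZ σ x' = shiftBy ((k : ℤ) - l) (sigmaZ σ x) := by
    have := congrArg (shiftBy (-(l : ℤ))) heq
    rw [shiftBy_shiftBy, shiftBy_shiftBy] at this
    have h0 : (-(l : ℤ)) + l = 0 := by ring
    rw [h0, shiftBy_zero] at this
    rw [← this]
    congr 1
    ring
  obtain ⟨m, hm⟩ := (hinj x hx x' hx').mp ⟨(k : ℤ) - l, horb⟩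
  set c : ℤ := offset σ x (m + 1) - 1 with hc
  have hcomm : sigmaZ σ x' = shiftBy c (sigmaZ σ x) := by
    rw [hm]; exact sigmaZ_shiftBy hσ x m
  -- aperiodicity forces k - l = c
  have hkl : (k : ℤ) - l = c := by
    have h1 : shiftBy ((k : ℤ) - l) (sigmaZ σ x) = shiftBy c (sigmaZ σ x) := by
      rw [← horb, hcomm]
    have h2 : shiftBy ((k : ℤ) - l - c) (shiftBy k (sigmaZ σ x))
        = shiftBy k (sigmaZ σ x) := by
      have h3 := congrArg (shiftBy (-c)) h1
      rw [shiftBy_shiftBy, shiftBy_shiftBy] at h3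
      have h4 : (-c) + ((k : ℤ) - l) = (k : ℤ) - l - c := by ring
      have h5 : (-c) + c = 0 := by ring
      rw [h4, h5, shiftBy_zero] at h3
      rw [shiftBy_shiftBy, add_comm ((k : ℤ) - l - c) (k : ℤ), ← shiftBy_shiftBy, h3]
    have hap' : ∀ p : ℕ, 0 < p → shift^[p] (shiftBy (k : ℤ) (sigmaZ σ x))
        ≠ shiftBy (k : ℤ) (sigmaZ σ x) := by
      intro p hp
      rw [← shift_iter_eq k]
      exact hap p hp
    have := aperiodic_int hap' _ h2
    omega
  -- bounds force m = 0
  have hx'1 : x' 1 = x (1 + m) := by rw [hm]; rfl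
  have hknneg : (0 : ℤ) ≤ (k : ℤ) := Int.natCast_nonneg k
  have hlnneg : (0 : ℤ) ≤ (l : ℤ) := Int.natCast_nonneg l
  have hkc : (k : ℤ) < ((σ (x 1)).length : ℤ) := by exact_mod_cast hk
  have hlc : (l : ℤ) < ((σ (x' 1)).length : ℤ) := by exact_mod_cast hl
  have hm0 : m = 0 := by
    by_contra hm0
    rcases lt_trichotomy m 0 with hmlt | hmeq | hmgt
    · -- m ≤ -1 : c = -(∑_{Ico (m+1) 1}) and the sum contains term at m+1
      have hco : offset σ x (m + 1) = 1 - ∑ i ∈ Finset.Ico (m + 1) (1 : ℤ),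
          ((σ (x i)).length : ℤ) := by
        unfold offset; rw [if_neg (by omega)]
      have hmem : m + 1 ∈ Finset.Ico (m + 1) (1 : ℤ) := by
        simp only [Finset.mem_Ico]
        omega
      have hsingle : ((σ (x (m + 1))).length : ℤ)
          ≤ ∑ i ∈ Finset.Ico (m + 1) (1 : ℤ), ((σ (x i)).length : ℤ) :=
        Finset.single_le_sum (fun i _ => Int.natCast_nonneg _) hmem
      have hxm : x' 1 = x (m + 1) := by rw [hx'1, add_comm]
      rw [hxm] at hlc
      omega
    · exact hm0 hmeq
    · -- m ≥ 1 : c = ∑_{Ico 1 (m+1)} contains term at 1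
      have hco : offset σ x (m + 1) = 1 + ∑ i ∈ Finset.Ico (1 : ℤ) (m + 1),
          ((σ (x i)).length : ℤ) := by
        unfold offset; rw [if_pos (by omega)]
      have hmem : (1 : ℤ) ∈ Finset.Ico (1 : ℤ) (m + 1) := by
        simp only [Finset.mem_Ico]
        omega
      have hsingle : ((σ (x 1)).length : ℤ)
          ≤ ∑ i ∈ Finset.Ico (1 : ℤ) (m + 1), ((σ (x i)).length : ℤ) :=
        Finset.single_le_sum (fun i _ => Int.natCast_nonneg _) hmem
      omega
  subst hm0
  rw [shiftBy_zero] at hm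
  have hc0 : c = 0 := by rw [hc, zero_add, offset_one]; norm_num
  constructor
  · exact hm.symm
  · omega

end SAdicPaper
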